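/- arXiv:1409.7510 — 3 statements merged into one kernel-verified Lean document; each statement's English description precedes it below -/
import Mathlib

section
/- If z = xw = wy for words x, y, w, z over an alphabet, then there exist unique words u, v and a unique integer i ≥ 0 such that x = uv, w = (uv)^i u, and y = vu. -/
/-- `k`-fold concatenation of a word with itself. -/
def listPow {A : Type*} (l : List A) : ℕ → List A
  | 0 => []
  | n + 1 => l ++ listPow l n

/-- Application of a morphism (given by its images of letters) to a word. -/
def wordMap {A : Type*} (φ : A → List A) (x : List A) : List A :=
  x.flatMap φ

/-- `k`-th power (iterate) of a morphism. -/
def morPow {A : Type*} (φ : A → List A) : ℕ → A → List A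
  | 0 => fun a => [a]
  | k + 1 => fun a => wordMap (morPow φ k) (φ a)

/-- `φ` is a right conjugate of `ψ` (notation `ψ ▷ φ`):
there is a word `w` with `w ψ(x) = φ(x) w` for all `x`. -/
def IsRightConjOf {A : Type*} (φ ψ : A → List A) : Prop :=
  ∃ w : List A, ∀ a : A, w ++ ψ a = φ a ++ w

/-- `φ` and `ψ` are conjugate morphisms. -/
def AreConjugates {A : Type*} (φ ψ : A → List A) : Prop :=
  IsRightConjOf φ ψ ∨ IsRightConjOf ψ φ

/-- `φL` is the leftmost conjugate of `φ`. -/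
def IsLeftmostConjOf {A : Type*} (φL φ : A → List A) : Prop :=
  IsRightConjOf φ φL ∧ ∀ ψ : A → List A, IsRightConjOf φL ψ → ψ = φL

/-- `φR` is the rightmost conjugate of `φ`. -/
def IsRightmostConjOf {A : Type*} (φR φ : A → List A) : Prop :=
  IsRightConjOf φR φ ∧ ∀ ψ : A → List A, IsRightConjOf ψ φR → ψ = φR

/-- A morphism is cyclic if all images of letters are powers of a common word. -/
def CyclicMorphism {A : Type*} (φ : A → List A) : Prop :=
  ∃ w : List A, ∀ a : A, ∃ n : ℕ, φ a = listPow w n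

/-- First letter of the image of each letter. -/
def Fst {A : Type*} (φ : A → List A) : A → Option A :=
  fun a => (φ a).head?

/-- Last letter of the image of each letter. -/
def Lst {A : Type*} (φ : A → List A) : A → Option A :=
  fun a => (φ a).getLast?

/-- A morphism is in class P if there is a palindrome `p` which is a prefix of
every `φ(α)` and such that `φ(α) p` is a palindrome for every letter `α`. -/
def IsClassP {A : Type*} (φ : A → List A) : Prop :=
  ∃ p : List A, p.reverse = p ∧
    ∀ a : A, p <+: φ a ∧ (φ a ++ p).reverse = φ a ++ p

/-- The finite word `v` is a factor of the infinite word `u`. -/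
def IsFactor {A : Type*} (u : ℕ → A) (v : List A) : Prop :=
  ∃ i : ℕ, v = (List.range v.length).map fun j => u (i + j)

/-- An infinite word is uniformly recurrent if every factor occurs in every
sufficiently long factor. -/
def UnifRecurrent {A : Type*} (u : ℕ → A) : Prop :=
  ∀ v : List A, IsFactor u v → ∃ n : ℕ,
    ∀ f : List A, IsFactor u f → f.length = n → v <:+: f

/-- An infinite word is eventually periodic. -/
def EventuallyPeriodic {A : Type*} (u : ℕ → A) : Prop :=
  ∃ p : ℕ, 0 < p ∧ ∃ N : ℕ, ∀ n : ℕ, N ≤ n → u (n + p) = u n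

/-- A factor `v` is right special in `u`. -/
def RightSpecial {A : Type*} (u : ℕ → A) (v : List A) : Prop :=
  ∃ x y : A, x ≠ y ∧ IsFactor u (v ++ [x]) ∧ IsFactor u (v ++ [y])

/-- A factor `v` is left special in `u`. -/
def LeftSpecial {A : Type*} (u : ℕ → A) (v : List A) : Prop :=
  ∃ x y : A, x ≠ y ∧ IsFactor u (x :: v) ∧ IsFactor u (y :: v)


lemma listPow_length {A : Type*} (l : List A) (n : ℕ) :
    (listPow l n).length = n * l.length := by
  induction n with
  | zero => simp [listPow]
  | succ n ih => simp [listPow, ih, Nat.succ_mul]; ring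

lemma ex_aux {A : Type*} (n : ℕ) : ∀ (x y w : List A), w.length ≤ n → x ≠ [] →
    x ++ w = w ++ y →
    ∃ u v i, x = u ++ v ∧ w = listPow (u ++ v) i ++ u ∧ y = v ++ u ∧
      u.length < x.length := by
  induction n with
  | zero =>
    intro x y w hw hx h
    have hw0 : w = [] := List.length_eq_zero_iff.mp (Nat.le_zero.mp hw)
    subst hw0
    refine ⟨[], x, 0, by simp, by simp [listPow], by simpa using h.symm, by
      simpa using List.length_pos_iff.mpr hx⟩
  | succ n ih =>
    intro x y w hw hx h
    by_cases hlt : w.length < x.length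
    · -- w is a prefix of x
      have hwp : w <+: x ++ w := h ▸ List.prefix_append w y
      have hwx : w <+: x :=
        List.prefix_of_prefix_length_le hwp (List.prefix_append x w) (le_of_lt hlt)
      obtain ⟨v, rfl⟩ := hwx
      refine ⟨w, v, 0, rfl, by simp [listPow], ?_, hlt⟩
      have := h
      rw [List.append_assoc] at this
      exact (List.append_cancel_left this).symm
    · push_neg at hlt
      have hxp : x <+: w :=
        List.prefix_of_prefix_length_le (h ▸ List.prefix_append x w)
          (List.prefix_append w y) hlt
      obtain ⟨w', rfl⟩ := hxp
      have h' : x ++ w' = w' ++ y :=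
        List.append_cancel_left (h.trans (List.append_assoc x w' y))
      have hlen : w'.length ≤ n := by
        have hx1 : 1 ≤ x.length := List.length_pos_iff.mpr hx
        simp only [List.length_append] at hw
        omega
      obtain ⟨u, v, i, h1, h2, h3, h4⟩ := ih x y w' hlen hx h'
      exact ⟨u, v, i + 1, h1, by rw [listPow, List.append_assoc, ← h2, ← h1], h3, h4⟩

/-- If z = xw = wy then there exist unique words u, v and a unique integer i ≥ 0
such that x = uv, w = (uv)^i u and y = vu (with the remainder condition |u| < |x|). -/
theorem stmt0 {A : Type*} (x y w z : List A) (hx : x ≠ [])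
    (h1 : z = x ++ w) (h2 : z = w ++ y) :
    ∃! t : List A × List A × ℕ,
      x = t.1 ++ t.2.1 ∧
      w = listPow (t.1 ++ t.2.1) t.2.2 ++ t.1 ∧
      y = t.2.1 ++ t.1 ∧
      t.1.length < x.length := by
  have h : x ++ w = w ++ y := h1 ▸ h2
  obtain ⟨u, v, i, e1, e2, e3, e4⟩ := ex_aux w.length x y w le_rfl hx h
  refine ⟨(u, v, i), ⟨e1, e2, e3, e4⟩, ?_⟩
  rintro ⟨u2, v2, i2⟩ ⟨f1, f2, f3, f4⟩
  simp only at f1 f2 f3 f4 ⊢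
  have L : x.length = (u ++ v).length := by rw [e1]
  have hL : 0 < x.length := List.length_pos_iff.mpr hx
  have len1 : w.length = i * x.length + u.length := by
    rw [e2, List.length_append, listPow_length, ← e1]
  have len2 : w.length = i2 * x.length + u2.length := by
    rw [f2, List.length_append, listPow_length, ← f1]
  have hi : i2 = i ∧ u2.length = u.length := by
    constructor
    · have d1 : w.length / x.length = i := by
        rw [len1, Nat.mul_comm, Nat.mul_add_div hL, Nat.div_eq_of_lt e4, Nat.add_zero]
      have d2 : w.length / x.length = i2 := by
        rw [len2, Nat.mul_comm, Nat.mul_add_div hL, Nat.div_eq_of_lt f4, Nat.add_zero]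
      omega
    · have d1 : w.length % x.length = u.length := by
        rw [len1, Nat.mul_comm, Nat.mul_add_mod, Nat.mod_eq_of_lt e4]
      have d2 : w.length % x.length = u2.length := by
        rw [len2, Nat.mul_comm, Nat.mul_add_mod, Nat.mod_eq_of_lt f4]
      omega
  obtain ⟨hi2, hlen⟩ := hi
  have hu : u2 = u := by
    have g1 : u = w.drop (i * x.length) := by
      rw [e2, ← listPow_length x i]
      conv_lhs => rw [← @List.drop_left _ (listPow x i) u]
      rw [e1]
    have g2 : u2 = w.drop (i * x.length) := by
      rw [f2, ← hi2, ← listPow_length x i2]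
      conv_lhs => rw [← @List.drop_left _ (listPow x i2) u2]
      rw [f1, hi2]
    rw [g1, g2]
  have hv : v2 = v := by
    have g1 : v = x.drop u.length := by rw [e1, List.drop_left]
    have g2 : v2 = x.drop u2.length := by rw [f1, List.drop_left]
    rw [g1, g2, hlen]
  simp [Prod.ext_iff, hu, hv, hi2]
end

section
/- Suppose z = xw = wy for words x, y, w, z, and let u, v, i be the unique data with x = uv, w = (uv)^i u, y = vu. Then the following are equivalent: (i) x is the reversal of y; (ii) u and v are both palindromes; (iii) z is a palindrome; (iv) xwy is a palindrome. Moreover, each of these implies that w is a palindrome. -/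
lemma lp_comm {A : Type*} (l : List A) (n : ℕ) :
    listPow l n ++ l = l ++ listPow l n := by
  induction n with
  | zero => simp [listPow]
  | succ n ih => simp only [listPow, List.append_assoc, ih]

lemma lp_rev {A : Type*} (l : List A) (n : ℕ) :
    (listPow l n).reverse = listPow l.reverse n := by
  induction n with
  | zero => simp [listPow]
  | succ n ih => simp only [listPow, List.reverse_append, ih, lp_comm]

lemma lp_shift {A : Type*} (u v : List A) (n : ℕ) :
    listPow (u ++ v) n ++ u = u ++ listPow (v ++ u) n := by
  induction n with
  | zero => simp [listPow]
  | succ n ih =>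
    simp only [listPow, List.append_assoc] at *
    rw [ih]

lemma key_rev {A : Type*} (u v : List A) (n : ℕ) :
    (listPow (u ++ v) n ++ u).reverse
      = u.reverse ++ listPow (v.reverse ++ u.reverse) n := by
  rw [List.reverse_append, lp_rev, List.reverse_append]

lemma pal_of {A : Type*} {u v : List A} (hu : u.reverse = u) (hv : v.reverse = v)
    (n : ℕ) : (listPow (u ++ v) n ++ u).reverse = listPow (u ++ v) n ++ u := by
  rw [key_rev, hu, hv, lp_shift]

lemma pal_to {A : Type*} {u v : List A} (n : ℕ)
    (h : (listPow (u ++ v) (n + 1) ++ u).reverse = listPow (u ++ v) (n + 1) ++ u) :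
    u.reverse = u ∧ v.reverse = v := by
  rw [key_rev, lp_shift] at h
  have hu : u.reverse = u ∧ listPow (v.reverse ++ u.reverse) (n + 1)
      = listPow (v ++ u) (n + 1) := List.append_inj h (by simp)
  have hu1 := hu.1
  have h2 := hu.2
  simp only [listPow, hu1, List.append_assoc] at h2
  have hv : v.reverse = v ∧ _ := List.append_inj h2 (by simp)
  exact ⟨hu1, hv.1⟩

/-- Let z = xw = wy, with x = uv, w = (uv)^i u, y = vu. Then the conditions
(i) x = ỹ, (ii) u and v are palindromes, (iii) z is a palindrome,
(iv) xwy is a palindrome, are all equivalent, and each implies that w is a palindrome. -/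
theorem stmt3 {A : Type*} (x y w z u v : List A) (i : ℕ)
    (h1 : z = x ++ w) (h2 : z = w ++ y)
    (hx : x = u ++ v) (hw : w = listPow (u ++ v) i ++ u) (hy : y = v ++ u) :
    List.TFAE [x = y.reverse,
               u.reverse = u ∧ v.reverse = v,
               z.reverse = z,
               (x ++ w ++ y).reverse = x ++ w ++ y] ∧
    (x = y.reverse → w.reverse = w) := by
  have hz : z = listPow (u ++ v) (i + 1) ++ u := by
    rw [h1, hx, hw]; simp [listPow, List.append_assoc]
  have hxwy : x ++ w ++ y = listPow (u ++ v) (i + 2) ++ u := by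
    rw [hx, hw, hy]
    show (u ++ v) ++ (listPow (u ++ v) i ++ u) ++ (v ++ u)
        = listPow (u ++ v) (i + 2) ++ u
    have hc : listPow (u ++ v) i ++ (u ++ (v ++ u))
        = (u ++ v) ++ (listPow (u ++ v) i ++ u) := by
      simp only [← List.append_assoc]
      congr 1
      rw [List.append_assoc, lp_comm]
    simp only [listPow, List.append_assoc, hc]
  have h12 : x = y.reverse ↔ u.reverse = u ∧ v.reverse = v := by
    rw [hx, hy, List.reverse_append]
    constructor
    · intro h
      exact List.append_inj h.symm (by simp)
    · rintro ⟨h1, h2⟩; rw [h1, h2]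
  have h23 : (u.reverse = u ∧ v.reverse = v) ↔ z.reverse = z := by
    rw [hz]
    exact ⟨fun h => pal_of h.1 h.2 _, fun h => pal_to i h⟩
  have h24 : (u.reverse = u ∧ v.reverse = v) ↔ (x ++ w ++ y).reverse = x ++ w ++ y := by
    rw [hxwy]
    exact ⟨fun h => pal_of h.1 h.2 _, fun h => pal_to (i + 1) h⟩
  constructor
  · tfae_have 1 ↔ 2 := h12
    tfae_have 2 ↔ 3 := h23
    tfae_have 2 ↔ 4 := h24
    tfae_finish
  · intro h
    rw [hw]
    exact pal_of (h12.mp h).1 (h12.mp h).2 i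
end

section
/- If u is an eventually periodic infinite word whose language is closed under reversal, then u is purely periodic and u = (pq)^ω for some palindromes p and q. -/
section Stmt17Aux

variable {A : Type*} (u : ℕ → A)

/-- The factor of `u` of length `L` starting at position `i`. -/
def stmtWord (L i : ℕ) : List A := (List.range L).map fun j => u (i + j)

lemma stmtWord_length (L i : ℕ) : (stmtWord u L i).length = L := by
  simp [stmtWord]

lemma stmtWord_isFactor (L i : ℕ) : IsFactor u (stmtWord u L i) :=
  ⟨i, by simp [stmtWord]⟩

lemma isFactor_eq_stmtWord {v : List A} (h : IsFactor u v) :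
    ∃ i, v = stmtWord u v.length i := h

lemma stmtWord_getElem? (L i k : ℕ) (h : k < L) :
    (stmtWord u L i)[k]? = some (u (i + k)) := by
  simp [stmtWord, List.getElem?_map, List.getElem?_range h]

lemma stmtWord_getElem?_none (L i k : ℕ) (h : L ≤ k) :
    (stmtWord u L i)[k]? = none :=
  List.getElem?_eq_none (by simp [stmtWord, h])

lemma stmtWord_rev_getElem? (L i k : ℕ) (h : k < L) :
    (stmtWord u L i).reverse[k]? = some (u (i + (L - 1 - k))) := by
  rw [List.getElem?_reverse (by simp [stmtWord, h])]
  rw [show (stmtWord u L i).length - 1 - k = L - 1 - k by simp [stmtWord]]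
  exact stmtWord_getElem? u L i _ (by omega)

lemma stmtWord_eq_elim {L a b : ℕ} (h : stmtWord u L a = stmtWord u L b)
    (k : ℕ) (hk : k < L) : u (a + k) = u (b + k) := by
  have := congrArg (fun l => l[k]?) h
  simp only [stmtWord_getElem? u L a k hk, stmtWord_getElem? u L b k hk] at this
  exact Option.some.inj this

lemma stmtWord_rev_eq_elim {L a b : ℕ} (h : (stmtWord u L a).reverse = stmtWord u L b)
    (k : ℕ) (hk : k < L) : u (a + (L - 1 - k)) = u (b + k) := by
  have := congrArg (fun l => l[k]?) h
  simp only [stmtWord_rev_getElem? u L a k hk, stmtWord_getElem? u L b k hk] at this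
  exact Option.some.inj this

/-- Reverses of factors occur at arbitrarily large positions. -/
lemma rev_occ (hcur : ∀ v : List A, IsFactor u v → IsFactor u v.reverse)
    (L j M : ℕ) : ∃ m, M ≤ m ∧ (stmtWord u L j).reverse = stmtWord u L m := by
  obtain ⟨i, hi⟩ := isFactor_eq_stmtWord u (hcur _ (stmtWord_isFactor u (M + j + L) 0))
  rw [List.length_reverse, stmtWord_length] at hi
  have key := stmtWord_rev_eq_elim u hi
  refine ⟨i + M, Nat.le_add_left M i, ?_⟩
  apply List.ext_getElem?
  intro k
  rcases lt_or_ge k L with hk | hk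
  · rw [stmtWord_rev_getElem? u L j k hk, stmtWord_getElem? u L (i + M) k hk]
    have h1 := key (M + k) (by omega)
    rw [show 0 + (M + j + L - 1 - (M + k)) = j + (L - 1 - k) by omega] at h1
    rw [h1, Nat.add_assoc]
  · rw [stmtWord_getElem?_none u L (i + M) k hk,
      List.getElem?_eq_none (by simp [stmtWord, hk])]

end Stmt17Aux

/-- An eventually periodic word with language closed under reversal is purely
periodic of the form (pq)^ω with p, q palindromes. -/
theorem stmt17 {A : Type*} (u : ℕ → A)
    (hep : EventuallyPeriodic u)
    (hcur : ∀ v : List A, IsFactor u v → IsFactor u v.reverse) :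
    ∃ p q : List A, p.reverse = p ∧ q.reverse = q ∧ p ++ q ≠ [] ∧
      ∀ n : ℕ, ∃ h : n % (p ++ q).length < (p ++ q).length,
        u n = (p ++ q)[n % (p ++ q).length]'h := by
  obtain ⟨p, hp, N, hN⟩ := hep
  -- The prefix of length N + p occurs again at some position m ≥ N.
  obtain ⟨j, hj⟩ := isFactor_eq_stmtWord u (hcur _ (stmtWord_isFactor u (N + p) 0))
  rw [List.length_reverse, stmtWord_length] at hj
  obtain ⟨m, hmN, hm⟩ := rev_occ u hcur (N + p) j N
  rw [← hj, List.reverse_reverse] at hm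
  have hocc : ∀ k, k < N + p → u k = u (m + k) := by
    intro k hk
    simpa using stmtWord_eq_elim u hm k hk
  -- hence u is purely periodic with period p
  have hper : ∀ n, u (n + p) = u n := by
    intro n
    rcases le_or_gt N n with h | h
    · exact hN n h
    · have h1 : u (n + p) = u (m + (n + p)) := hocc (n + p) (by omega)
      have h2 : u (m + n + p) = u (m + n) := hN (m + n) (by omega)
      have h3 : u n = u (m + n) := hocc n (by omega)
      rw [h1, ← Nat.add_assoc, h2, ← h3]
  have hmod : ∀ n, u n = u (n % p) := by
    intro n
    induction n using Nat.strong_induction_on with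
    | _ n ih =>
      rcases lt_or_ge n p with h | h
      · rw [Nat.mod_eq_of_lt h]
      · have h1 : n - p + p = n := Nat.sub_add_cancel h
        have h2 := hper (n - p)
        rw [h1] at h2
        rw [h2, ih (n - p) (by omega), Nat.mod_eq_sub_mod h]
  -- the reversal of the period word occurs at some position i
  obtain ⟨i, hi⟩ := isFactor_eq_stmtWord u (hcur _ (stmtWord_isFactor u p 0))
  rw [List.length_reverse, stmtWord_length] at hi
  have hik : ∀ k, (i + k) % p = (i % p + k) % p := by
    intro k
    have h0 := Nat.div_add_mod i p
    calc (i + k) % p = (p * (i / p) + (i % p + k)) % p := by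
          rw [← Nat.add_assoc, h0]
      _ = (i % p + k) % p := Nat.mul_add_mod _ _ _
  have hr : i % p < p := Nat.mod_lt i hp
  obtain ⟨r, hrdef⟩ : ∃ r, i % p = r := ⟨_, rfl⟩
  rw [hrdef] at hr
  simp only [hrdef] at hik
  -- w = t ++ s with t, s the two parts of the period word cut at r
  have hts : stmtWord u r 0 ++ stmtWord u (p - r) r = stmtWord u p 0 := by
    apply List.ext_getElem?
    intro k
    rcases lt_or_ge k p with hk | hk
    · rw [stmtWord_getElem? u p 0 k hk, List.getElem?_append]
      rcases lt_or_ge k r with h | h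
      · rw [if_pos (by rw [stmtWord_length]; exact h), stmtWord_getElem? u r 0 k h]
      · rw [if_neg (by rw [stmtWord_length]; omega), stmtWord_length,
          stmtWord_getElem? u (p - r) r (k - r) (by omega)]
        rw [show r + (k - r) = 0 + k by omega]
    · rw [stmtWord_getElem?_none u p 0 k hk,
        List.getElem?_eq_none (by simp [stmtWord]; omega)]
  -- s ++ t is the reversal of the period word
  have hst : stmtWord u (p - r) r ++ stmtWord u r 0 = (stmtWord u p 0).reverse := by
    apply List.ext_getElem?
    intro k
    rw [hi]
    rcases lt_or_ge k p with hk | hk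
    · rw [stmtWord_getElem? u p i k hk, List.getElem?_append]
      have hiku : u (i + k) = u ((r + k) % p) := by rw [hmod (i + k), hik]
      rcases lt_or_ge k (p - r) with h | h
      · rw [if_pos (by rw [stmtWord_length]; exact h),
          stmtWord_getElem? u (p - r) r k h, hiku,
          Nat.mod_eq_of_lt (by omega)]
      · rw [if_neg (by rw [stmtWord_length]; omega), stmtWord_length,
          stmtWord_getElem? u r 0 (k - (p - r)) (by omega), hiku,
          Nat.mod_eq_sub_mod (by omega), Nat.mod_eq_of_lt (by omega)]
        rw [show (0 : ℕ) + (k - (p - r)) = r + k - p by omega]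
    · rw [stmtWord_getElem?_none u p i k hk,
        List.getElem?_eq_none (by simp [stmtWord]; omega)]
  -- both pieces are palindromes
  have hpal : stmtWord u (p - r) r = (stmtWord u (p - r) r).reverse ∧
      stmtWord u r 0 = (stmtWord u r 0).reverse := by
    apply List.append_inj
    · rw [hst, ← hts, List.reverse_append]
    · simp
  refine ⟨stmtWord u r 0, stmtWord u (p - r) r, hpal.2.symm, hpal.1.symm, ?_, ?_⟩
  · intro hcon
    have := congrArg List.length hcon
    simp [stmtWord] at this
    omega
  · intro n
    have hlen : (stmtWord u r 0 ++ stmtWord u (p - r) r).length = p := by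
      simp [stmtWord]; omega
    have hnp : n % p < p := Nat.mod_lt n hp
    refine ⟨by rw [hlen]; exact Nat.mod_lt n hp, ?_⟩
    symm
    rw [List.getElem_eq_iff, hlen, hts, stmtWord_getElem? u p 0 (n % p) hnp,
      Nat.zero_add, ← hmod n]
end
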